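/- Let n, m ∈ ℕ, A : Matrix (Fin n) (Fin n) ℂ with all eigenvalues having strictly positive imaginary part, Ā : Matrix (Fin m) (Fin m) ℂ with all eigenvalues having strictly negative imaginary part, B : Matrix (Fin n) (Fin 1) ℂ, and C̄ : Matrix (Fin 1) (Fin m) ℂ. Then the integral M := ∫₀^∞ exp(izA) · B · C̄ · exp(-izĀ) dz converges (the integrand is Bochner integrable on [0,∞)). -/

import Mathlib

open Complex MeasureTheory NormedSpace

attribute [local instance] Matrix.frobeniusNormedAddCommGroup Matrix.frobeniusNormedSpace

attribute [local instance] Matrix.frobeniusNormedRing Matrix.frobeniusNormedAlgebra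

namespace Stmt6Aux

open scoped Matrix

lemma pow_le_exp_aux {δ : ℝ} (hδ : 0 < δ) (j : ℕ) {z : ℝ} (hz : 0 ≤ z) :
    z ^ j ≤ ((j.factorial : ℝ) / δ ^ j) * Real.exp (δ * z) := by
  have h := Real.pow_div_factorial_le_exp (x := δ * z) (mul_nonneg hδ.le hz) j
  rw [mul_pow] at h
  have hδj : (0:ℝ) < δ ^ j := pow_pos hδ j
  have hfac : (0:ℝ) < (j.factorial : ℝ) := by exact_mod_cast j.factorial_pos
  calc z ^ j = (δ ^ j * z ^ j / (j.factorial : ℝ)) * ((j.factorial : ℝ) / δ ^ j) := by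
        field_simp
    _ ≤ Real.exp (δ * z) * ((j.factorial : ℝ) / δ ^ j) :=
        mul_le_mul_of_nonneg_right h (by positivity)
    _ = ((j.factorial : ℝ) / δ ^ j) * Real.exp (δ * z) := mul_comm _ _

lemma norm_le_entry_sum {p q : ℕ} (X : Matrix (Fin p) (Fin q) ℂ) :
    ‖X‖ ≤ ∑ i, ∑ j, ‖X i j‖ := by
  set S := ∑ i, ∑ j, ‖X i j‖ with hS
  have hS0 : 0 ≤ S := Finset.sum_nonneg fun _ _ => Finset.sum_nonneg fun _ _ => norm_nonneg _
  have hentry : ∀ i j, ‖X i j‖ ≤ S := by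
    intro i j
    calc ‖X i j‖ ≤ ∑ j', ‖X i j'‖ :=
          Finset.single_le_sum (fun _ _ => norm_nonneg _) (Finset.mem_univ j)
      _ ≤ S := Finset.single_le_sum (f := fun i' => ∑ j', ‖X i' j'‖)
          (fun _ _ => Finset.sum_nonneg fun _ _ => norm_nonneg _) (Finset.mem_univ i)
  rw [Matrix.frobenius_norm_def]
  have key : (∑ i, ∑ j, ‖X i j‖ ^ (2:ℝ)) ≤ S ^ (2:ℕ) := by
    rw [sq]
    calc (∑ i, ∑ j, ‖X i j‖ ^ (2:ℝ)) ≤ ∑ i, ∑ j, ‖X i j‖ * S := by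
          refine Finset.sum_le_sum fun i _ => Finset.sum_le_sum fun j _ => ?_
          have : ‖X i j‖ ^ (2:ℝ) = ‖X i j‖ * ‖X i j‖ := by
            rw [show (2:ℝ) = ((2:ℕ):ℝ) by norm_num, Real.rpow_natCast, sq]
          rw [this]
          exact mul_le_mul_of_nonneg_left (hentry i j) (norm_nonneg _)
      _ = S * S := by simp_rw [← Finset.sum_mul]; rfl
  calc (∑ i, ∑ j, ‖X i j‖ ^ (2:ℝ)) ^ ((1:ℝ)/2)
      ≤ ((S ^ (2:ℕ) : ℝ)) ^ ((1:ℝ)/2) := by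
        apply Real.rpow_le_rpow (Finset.sum_nonneg fun _ _ => Finset.sum_nonneg fun _ _ =>
          Real.rpow_nonneg (norm_nonneg _) _) key (by norm_num)
    _ = S := by
        rw [← Real.rpow_natCast S 2, ← Real.rpow_mul hS0]
        norm_num

lemma piece_decay {k : ℕ} (M : Matrix (Fin k) (Fin k) ℂ) {μ : ℂ} (hμ : 0 < μ.im)
    (v : Fin k → ℂ) (l : ℕ)
    (hv : ((M - μ • (1 : Matrix (Fin k) (Fin k) ℂ)) ^ l) *ᵥ v = 0) :
    ∃ C : ℝ, 0 ≤ C ∧ ∀ z : ℝ, 0 ≤ z →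
      ‖(NormedSpace.exp ((I * (z:ℂ)) • M)) *ᵥ v‖ ≤ C * Real.exp (-(μ.im / 2) * z) := by
  classical
  set N : Matrix (Fin k) (Fin k) ℂ := M - μ • 1 with hN
  set δ : ℝ := μ.im / 2 with hδdef
  have hδ : 0 < δ := half_pos hμ
  refine ⟨∑ j ∈ Finset.range l, δ⁻¹ ^ j * ‖(N ^ j) *ᵥ v‖, by positivity, fun z hz => ?_⟩
  have hsplit : (I * (z:ℂ)) • M
      = algebraMap ℂ (Matrix (Fin k) (Fin k) ℂ) (I * z * μ) + (I * (z:ℂ)) • N := by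
    rw [Algebra.algebraMap_eq_smul_one, hN, smul_sub, smul_smul]
    abel
  have hcomm : Commute (algebraMap ℂ (Matrix (Fin k) (Fin k) ℂ) (I * ↑z * μ))
      ((I * (z:ℂ)) • N) := Algebra.commutes _ _
  have hexp : NormedSpace.exp ((I * (z:ℂ)) • M)
      = Complex.exp (I * z * μ) • NormedSpace.exp ((I * (z:ℂ)) • N) := by
    rw [hsplit, Matrix.exp_add_of_commute _ _ hcomm]
    erw [← algebraMap_exp_comm]
    rw [← Complex.exp_eq_exp_ℂ,
      Algebra.algebraMap_eq_smul_one, smul_mul_assoc, one_mul]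
  set X : Matrix (Fin k) (Fin k) ℂ := (I * (z:ℂ)) • N with hX
  let L : Matrix (Fin k) (Fin k) ℂ →ₗ[ℂ] (Fin k → ℂ) :=
    { toFun := fun Y => Y *ᵥ v
      map_add' := fun Y Z => Matrix.add_mulVec Y Z v
      map_smul' := fun c Y => Matrix.smul_mulVec c Y v }
  have hLc : Continuous L := LinearMap.continuous_of_finiteDimensional L
  have hterm : ∀ j : ℕ, L (((j.factorial : ℂ)⁻¹) • X ^ j)
      = ((j.factorial : ℂ)⁻¹ * (I * z) ^ j) • ((N ^ j) *ᵥ v) := by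
    intro j
    have hXj : X ^ j = (I * (z:ℂ)) ^ j • N ^ j := by rw [hX, smul_pow]
    show ((j.factorial : ℂ)⁻¹ • X ^ j) *ᵥ v = _
    rw [hXj, Matrix.smul_mulVec, Matrix.smul_mulVec, smul_smul]
  have hvanish : ∀ j ∉ Finset.range l, L (((j.factorial : ℂ)⁻¹) • X ^ j) = 0 := by
    intro j hj
    rw [Finset.mem_range, not_lt] at hj
    have hpow : N ^ j = N ^ (j - l) * N ^ l := by
      rw [← pow_add, Nat.sub_add_cancel hj]
    rw [hterm j, hpow, ← Matrix.mulVec_mulVec, hv, Matrix.mulVec_zero, smul_zero]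
  have h1 : HasSum (fun j : ℕ => ((j.factorial : ℂ)⁻¹) • X ^ j) (NormedSpace.exp X) := by
    rw [exp_eq_tsum ℂ]
    exact (expSeries_summable' (𝕂 := ℂ) X).hasSum
  have h2 : HasSum (fun j : ℕ => L (((j.factorial : ℂ)⁻¹) • X ^ j)) (L (NormedSpace.exp X)) :=
    h1.map L.toAddMonoidHom hLc
  have h3 : HasSum (fun j : ℕ => L (((j.factorial : ℂ)⁻¹) • X ^ j))
      (∑ j ∈ Finset.range l, L (((j.factorial : ℂ)⁻¹) • X ^ j)) :=
    hasSum_sum_of_ne_finset_zero hvanish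
  have hsum : (NormedSpace.exp X) *ᵥ v
      = ∑ j ∈ Finset.range l, ((j.factorial : ℂ)⁻¹ * (I * z) ^ j) • ((N ^ j) *ᵥ v) := by
    have := h2.unique h3
    simp only [hterm] at this
    exact this
  -- now norms
  have hre : (I * (z:ℂ) * μ).re = -(μ.im * z) := by
    simp [Complex.mul_re, Complex.mul_im]
    ring
  have hnormexp : ‖Complex.exp (I * (z:ℂ) * μ)‖ = Real.exp (-(μ.im * z)) := by
    rw [Complex.norm_exp, hre]
  have hcoeff : ∀ j : ℕ, ‖(j.factorial : ℂ)⁻¹ * (I * (z:ℂ)) ^ j‖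
      = ((j.factorial : ℝ))⁻¹ * z ^ j := by
    intro j
    rw [norm_mul, norm_inv, norm_pow, norm_mul, Complex.norm_I, one_mul,
      Complex.norm_real, Real.norm_eq_abs, _root_.abs_of_nonneg hz, Complex.norm_natCast]
  have hSbound : ‖(NormedSpace.exp X) *ᵥ v‖
      ≤ (∑ j ∈ Finset.range l, δ⁻¹ ^ j * ‖(N ^ j) *ᵥ v‖) * Real.exp (δ * z) := by
    rw [hsum]
    refine (norm_sum_le _ _).trans ?_
    rw [Finset.sum_mul]
    refine Finset.sum_le_sum fun j _ => ?_
    rw [norm_smul, hcoeff]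
    have hzj := pow_le_exp_aux hδ j hz
    have hfac : (0:ℝ) < (j.factorial : ℝ) := by exact_mod_cast j.factorial_pos
    calc ((j.factorial : ℝ))⁻¹ * z ^ j * ‖(N ^ j) *ᵥ v‖
        ≤ ((j.factorial : ℝ))⁻¹ * (((j.factorial : ℝ) / δ ^ j) * Real.exp (δ * z))
            * ‖(N ^ j) *ᵥ v‖ := by
          apply mul_le_mul_of_nonneg_right _ (norm_nonneg _)
          exact mul_le_mul_of_nonneg_left hzj (by positivity)
      _ = δ⁻¹ ^ j * ‖(N ^ j) *ᵥ v‖ * Real.exp (δ * z) := by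
          field_simp
          rw [one_div, inv_pow, mul_comm (δ ^ j), mul_assoc, mul_inv_cancel₀ (pow_ne_zero j hδ.ne'), mul_one]
  have hfinal : ‖(NormedSpace.exp ((I * (z:ℂ)) • M)) *ᵥ v‖
      = Real.exp (-(μ.im * z)) * ‖(NormedSpace.exp X) *ᵥ v‖ := by
    rw [hexp, Matrix.smul_mulVec, norm_smul, hnormexp]
  rw [hfinal]
  calc Real.exp (-(μ.im * z)) * ‖(NormedSpace.exp X) *ᵥ v‖
      ≤ Real.exp (-(μ.im * z)) *
        ((∑ j ∈ Finset.range l, δ⁻¹ ^ j * ‖(N ^ j) *ᵥ v‖) * Real.exp (δ * z)) :=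
        mul_le_mul_of_nonneg_left hSbound (Real.exp_nonneg _)
    _ = (∑ j ∈ Finset.range l, δ⁻¹ ^ j * ‖(N ^ j) *ᵥ v‖) * Real.exp (-δ * z) := by
        rw [mul_comm (Real.exp _), mul_assoc, ← Real.exp_add]
        congr 2
        rw [hδdef]; ring

lemma vec_decay (k : ℕ) (M : Matrix (Fin k) (Fin k) ℂ)
    (hM : ∀ μ ∈ spectrum ℂ M, 0 < μ.im) (v : Fin k → ℂ) :
    ∃ C ε : ℝ, 0 ≤ C ∧ 0 < ε ∧ ∀ z : ℝ, 0 ≤ z →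
      ‖(NormedSpace.exp ((I * (z:ℂ)) • M)) *ᵥ v‖ ≤ C * Real.exp (-ε * z) := by
  classical
  set T : Module.End ℂ (Fin k → ℂ) := Matrix.toLinAlgEquiv' M with hT
  have htop : v ∈ ⨆ μ : ℂ, T.maxGenEigenspace μ := by
    rw [Module.End.iSup_maxGenEigenspace_eq_top]; trivial
  refine Submodule.iSup_induction (motive := fun v => ∃ C ε : ℝ, 0 ≤ C ∧ 0 < ε ∧ ∀ z : ℝ, 0 ≤ z →
      ‖(NormedSpace.exp ((I * (z:ℂ)) • M)) *ᵥ v‖ ≤ C * Real.exp (-ε * z)) _ htop ?_ ?_ ?_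
  · intro μ w hw
    by_cases hw0 : w = 0
    · exact ⟨0, 1, le_refl _, one_pos, fun z hz => by
        simp [hw0, Matrix.mulVec_zero]⟩
    · obtain ⟨l, hl⟩ := (Module.End.mem_maxGenEigenspace T μ w).mp hw
      have hμspec : μ ∈ spectrum ℂ M := by
        have hge : T.HasGenEigenvalue μ l := by
          rw [Module.End.hasGenEigenvalue_iff]
          intro hbot
          have : w ∈ T.genEigenspace μ l := (Module.End.mem_genEigenspace_nat).mpr hl
          rw [hbot] at this
          exact hw0 (Submodule.mem_bot ℂ |>.mp this)
        have heig : T.HasEigenvalue μ := Module.End.hasEigenvalue_of_hasGenEigenvalue hge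
        have : μ ∈ spectrum ℂ T := Module.End.hasEigenvalue_iff_mem_spectrum.mp heig
        rwa [hT, AlgEquiv.spectrum_eq] at this
      have hμ : 0 < μ.im := hM μ hμspec
      have hmat : ((M - μ • (1 : Matrix (Fin k) (Fin k) ℂ)) ^ l) *ᵥ w = 0 := by
        have : T - μ • 1 = Matrix.toLinAlgEquiv' (M - μ • 1) := by
          rw [map_sub, _root_.map_smul, map_one, hT]
        have h2 : ((T - μ • 1) ^ l) w
            = ((M - μ • (1 : Matrix (Fin k) (Fin k) ℂ)) ^ l) *ᵥ w := by
          rw [this, ← map_pow, Matrix.toLinAlgEquiv'_apply]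
        rw [← h2]; exact hl
      obtain ⟨C, hC0, hC⟩ := piece_decay M hμ w l hmat
      exact ⟨C, μ.im / 2, hC0, half_pos hμ, fun z hz => hC z hz⟩
  · exact ⟨0, 1, le_refl _, one_pos, fun z hz => by simp [Matrix.mulVec_zero]⟩
  · rintro x y ⟨C1, ε1, hC1, hε1, h1⟩ ⟨C2, ε2, hC2, hε2, h2⟩
    refine ⟨C1 + C2, min ε1 ε2, by positivity, lt_min hε1 hε2, fun z hz => ?_⟩
    have hx1 : Real.exp (-ε1 * z) ≤ Real.exp (-(min ε1 ε2) * z) := by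
      apply Real.exp_le_exp.mpr
      have := min_le_left ε1 ε2
      nlinarith
    have hx2 : Real.exp (-ε2 * z) ≤ Real.exp (-(min ε1 ε2) * z) := by
      apply Real.exp_le_exp.mpr
      have := min_le_right ε1 ε2
      nlinarith
    calc ‖(NormedSpace.exp ((I * (z:ℂ)) • M)) *ᵥ (x + y)‖
        ≤ ‖(NormedSpace.exp ((I * (z:ℂ)) • M)) *ᵥ x‖ + ‖(NormedSpace.exp ((I * (z:ℂ)) • M)) *ᵥ y‖ := by
          rw [Matrix.mulVec_add]; exact norm_add_le _ _
      _ ≤ C1 * Real.exp (-ε1 * z) + C2 * Real.exp (-ε2 * z) := add_le_add (h1 z hz) (h2 z hz)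
      _ ≤ C1 * Real.exp (-(min ε1 ε2) * z) + C2 * Real.exp (-(min ε1 ε2) * z) :=
          add_le_add (mul_le_mul_of_nonneg_left hx1 hC1) (mul_le_mul_of_nonneg_left hx2 hC2)
      _ = (C1 + C2) * Real.exp (-(min ε1 ε2) * z) := by ring

lemma mat_decay (k : ℕ) (M : Matrix (Fin k) (Fin k) ℂ)
    (hM : ∀ μ ∈ spectrum ℂ M, 0 < μ.im) :
    ∃ C ε : ℝ, 0 ≤ C ∧ 0 < ε ∧ ∀ z : ℝ, 0 ≤ z →
      ‖NormedSpace.exp ((I * (z:ℂ)) • M)‖ ≤ C * Real.exp (-ε * z) := by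
  classical
  rcases Nat.eq_zero_or_pos k with hk | hk
  · subst hk
    refine ⟨0, 1, le_refl _, one_pos, fun z hz => ?_⟩
    have : NormedSpace.exp ((I * (z:ℂ)) • M) = 0 := Subsingleton.elim _ _
    simp [this]
  · have hne : Nonempty (Fin k) := Fin.pos_iff_nonempty.mp hk
    have H := fun j : Fin k => vec_decay k M hM (Pi.single j 1)
    choose C ε hC0 hε0 hb using H
    set ε₀ : ℝ := Finset.univ.inf' (Finset.univ_nonempty) ε with hε₀
    have hε₀pos : 0 < ε₀ := by
      rw [hε₀, Finset.lt_inf'_iff]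
      exact fun j _ => hε0 j
    have hε₀le : ∀ j, ε₀ ≤ ε j := fun j => Finset.inf'_le _ (Finset.mem_univ j)
    refine ⟨(k : ℝ) * ∑ j, C j, ε₀, mul_nonneg (Nat.cast_nonneg k) (Finset.sum_nonneg fun j _ => hC0 j), hε₀pos, fun z hz => ?_⟩
    set X := NormedSpace.exp ((I * (z:ℂ)) • M) with hXdef
    have hentry : ∀ i j, ‖X i j‖ ≤ C j * Real.exp (-ε₀ * z) := by
      intro i j
      have h1 : ‖X i j‖ ≤ ‖X *ᵥ Pi.single j 1‖ := by
        have : X *ᵥ Pi.single j 1 = fun i => X i j := by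
          funext i'
          simp [Matrix.mulVec_single]
        rw [this]
        exact norm_le_pi_norm (fun i' => X i' j) i
      refine h1.trans ((hb j z hz).trans ?_)
      apply mul_le_mul_of_nonneg_left _ (hC0 j)
      apply Real.exp_le_exp.mpr
      nlinarith [hε₀le j]
    calc ‖X‖ ≤ ∑ i, ∑ j, ‖X i j‖ := norm_le_entry_sum X
      _ ≤ ∑ i : Fin k, ∑ j, C j * Real.exp (-ε₀ * z) := by
          exact Finset.sum_le_sum fun i _ => Finset.sum_le_sum fun j _ => hentry i j
      _ = (k : ℝ) * ∑ j, C j * Real.exp (-ε₀ * z) := by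
          rw [Finset.sum_const, Finset.card_univ, Fintype.card_fin, nsmul_eq_mul]
      _ = ((k : ℝ) * ∑ j, C j) * Real.exp (-ε₀ * z) := by
          rw [← Finset.sum_mul]; ring

end Stmt6Aux

theorem stmt6 (n m : ℕ)
    (A : Matrix (Fin n) (Fin n) ℂ) (Abar : Matrix (Fin m) (Fin m) ℂ)
    (hA : ∀ μ ∈ spectrum ℂ A, 0 < μ.im)
    (hAbar : ∀ ν ∈ spectrum ℂ Abar, ν.im < 0)
    (B : Matrix (Fin n) (Fin 1) ℂ) (Cbar : Matrix (Fin 1) (Fin m) ℂ) :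
    @IntegrableOn ℝ (Matrix (Fin n) (Fin m) ℂ) _ _ SeminormedAddGroup.toContinuousENorm
      (fun z : ℝ => NormedSpace.exp ((I * z) • A) * B * Cbar * NormedSpace.exp ((-(I * z)) • Abar))
      (Set.Ioi 0) volume := by
  classical
  have hAbar' : ∀ μ ∈ spectrum ℂ (-Abar), 0 < μ.im := by
    intro μ hμ
    have : -μ ∈ spectrum ℂ Abar := by
      rw [← spectrum.neg_eq] at hμ
      simpa using Set.mem_neg.mp hμ
    have := hAbar _ this
    simpa using this
  obtain ⟨C1, ε1, hC10, hε10, h1⟩ := Stmt6Aux.mat_decay n A hA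
  obtain ⟨C2, ε2, hC20, hε20, h2⟩ := Stmt6Aux.mat_decay m (-Abar) hAbar'
  have hneg : ∀ z : ℝ, (-(I * (z:ℂ))) • Abar = (I * (z:ℂ)) • (-Abar) := by
    intro z
    rw [neg_smul, smul_neg]
  have hcont : Continuous (fun z : ℝ =>
      NormedSpace.exp ((I * z) • A) * B * Cbar * NormedSpace.exp ((-(I * z)) • Abar)) := by
    have hc1 : Continuous fun z : ℝ => (I * (z:ℂ)) • A :=
      ((continuous_const.mul Complex.continuous_ofReal)).smul continuous_const
    have hc2 : Continuous fun z : ℝ => (-(I * (z:ℂ))) • Abar :=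
      ((continuous_const.mul Complex.continuous_ofReal).neg).smul continuous_const
    have he1 : Continuous fun z : ℝ => NormedSpace.exp ((I * (z:ℂ)) • A) :=
      (exp_continuous (𝔸 := Matrix (Fin n) (Fin n) ℂ)).comp hc1
    have he2 : Continuous fun z : ℝ => NormedSpace.exp ((-(I * (z:ℂ))) • Abar) :=
      (exp_continuous (𝔸 := Matrix (Fin m) (Fin m) ℂ)).comp hc2
    exact ((he1.matrix_mul continuous_const).matrix_mul continuous_const).matrix_mul he2
  haveI : TopologicalSpace.PseudoMetrizableSpace (Matrix (Fin n) (Fin m) ℂ) :=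
    inferInstanceAs (TopologicalSpace.PseudoMetrizableSpace (Fin n → Fin m → ℂ))
  refine Integrable.mono' (g := fun z : ℝ =>
      (C1 * ‖B‖ * ‖Cbar‖ * C2) * Real.exp (-(ε1 + ε2) * z)) ?_ hcont.aestronglyMeasurable ?_
  · exact (exp_neg_integrableOn_Ioi 0 (by positivity)).const_mul _
  · rw [ae_restrict_iff' measurableSet_Ioi]
    filter_upwards with z hz
    have hz0 : (0:ℝ) ≤ z := le_of_lt hz
    have hb1 := h1 z hz0
    have hb2 := h2 z hz0
    calc ‖NormedSpace.exp ((I * z) • A) * B * Cbar * NormedSpace.exp ((-(I * z)) • Abar)‖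
        ≤ ‖NormedSpace.exp ((I * z) • A) * B * Cbar‖ * ‖NormedSpace.exp ((-(I * z)) • Abar)‖ :=
          Matrix.frobenius_norm_mul _ _
      _ ≤ ‖NormedSpace.exp ((I * z) • A) * B‖ * ‖Cbar‖ * ‖NormedSpace.exp ((-(I * z)) • Abar)‖ := by
          apply mul_le_mul_of_nonneg_right (Matrix.frobenius_norm_mul _ _) (norm_nonneg _)
      _ ≤ ‖NormedSpace.exp ((I * z) • A)‖ * ‖B‖ * ‖Cbar‖ * ‖NormedSpace.exp ((-(I * z)) • Abar)‖ := by
          apply mul_le_mul_of_nonneg_right (mul_le_mul_of_nonneg_right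
            (Matrix.frobenius_norm_mul _ _) (norm_nonneg _)) (norm_nonneg _)
      _ ≤ (C1 * Real.exp (-ε1 * z)) * ‖B‖ * ‖Cbar‖ * (C2 * Real.exp (-ε2 * z)) := by
          have hb2' : ‖NormedSpace.exp ((-(I * (z:ℂ))) • Abar)‖ ≤ C2 * Real.exp (-ε2 * z) := by
            rw [hneg z]; exact hb2
          apply mul_le_mul
          · apply mul_le_mul_of_nonneg_right (mul_le_mul_of_nonneg_right hb1 (norm_nonneg _))
              (norm_nonneg _)
          · exact hb2'
          · exact norm_nonneg _
          · positivity
      _ = (C1 * ‖B‖ * ‖Cbar‖ * C2) * Real.exp (-(ε1 + ε2) * z) := by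
          rw [show -(ε1 + ε2) * z = -ε1 * z + -ε2 * z by ring, Real.exp_add]
          ring
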